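/- Let n ≥ 2 and let A be a (l-1)×l integer matrix of rank l-1 whose columns sum to zero and each of whose rows has nonzero entries forming one of the multisets {1,1,-2}, {2,-2}, {1,-1}, {1,1}, {1,-2}, {1}, {-1}, {2}, {-2}. If the system A y ≡ 0 (mod n) admits an n-effective solution, then n ≤ 2^{l-1}. -/

import Mathlib

/-- A vector is `p`-trivial if all its entries are congruent mod `p`. -/
def pTrivial (p : ℕ) {k : ℕ} (x : Fin k → ℤ) : Prop :=
  ∀ i j, x i ≡ x j [ZMOD (p : ℤ)]

/-- A vector is `n`-effective if it is not `p`-trivial for any prime `p` dividing `n`. -/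
def nEffective (n : ℕ) {k : ℕ} (x : Fin k → ℤ) : Prop :=
  ∀ p : ℕ, p.Prime → p ∣ n → ¬ pTrivial p x

/-- The multiset of nonzero entries of a row. -/
def nonzeroEntries {μ : ℕ} (r : Fin μ → ℤ) : Multiset ℤ :=
  (Finset.univ.val.map r).filter (fun x => x ≠ 0)

/-- A row is of one of the nine admissible types. -/
def admissibleRow {μ : ℕ} (r : Fin μ → ℤ) : Prop :=
  nonzeroEntries r ∈
    ({ {1, 1, -2}, {2, -2}, {1, -1}, {1, 1}, {1, -2}, {1}, {-1}, {2}, {-2} } :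
      Set (Multiset ℤ))


open Matrix Finset

/-- number of entries of `r` equal to `v` -/
def cnt {k : ℕ} (r : Fin k → ℤ) (v : ℤ) : ℕ := (Finset.univ.filter (fun j => r j = v)).card

/-- number of nonzero entries -/
def nzc {k : ℕ} (r : Fin k → ℤ) : ℕ := (Finset.univ.filter (fun j => r j ≠ 0)).card

def Wt1 {k : ℕ} (r : Fin k → ℤ) : Prop :=
  (∀ j, r j = 0 ∨ r j = 1 ∨ r j = -1) ∧ cnt r 1 ≤ 1 ∧ cnt r (-1) ≤ 1

def Wt2 {k : ℕ} (r : Fin k → ℤ) : Prop :=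
  ((∀ j, r j = 0 ∨ r j = 1 ∨ r j = -2) ∧ cnt r 1 ≤ 2 ∧ cnt r (-2) ≤ 1)
  ∨ ((∀ j, r j = 0 ∨ r j = 2 ∨ r j = -2) ∧ cnt r 2 ≤ 1 ∧ cnt r (-2) ≤ 1)

lemma cnt_comp_le {k k' : ℕ} (r : Fin k → ℤ) (f : Fin k' → Fin k)
    (hf : Function.Injective f) (v : ℤ) : cnt (r ∘ f) v ≤ cnt r v := by
  apply Finset.card_le_card_of_injOn f
  · intro a ha; simp_all
  · exact hf.injOn

lemma Wt1_comp {k k' : ℕ} {r : Fin k → ℤ} (h : Wt1 r) (f : Fin k' → Fin k)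
    (hf : Function.Injective f) : Wt1 (r ∘ f) :=
  ⟨fun j => h.1 (f j), le_trans (cnt_comp_le r f hf 1) h.2.1,
    le_trans (cnt_comp_le r f hf (-1)) h.2.2⟩

lemma Wt2_comp {k k' : ℕ} {r : Fin k → ℤ} (h : Wt2 r) (f : Fin k' → Fin k)
    (hf : Function.Injective f) : Wt2 (r ∘ f) := by
  rcases h with ⟨h1, h2, h3⟩ | ⟨h1, h2, h3⟩
  · exact Or.inl ⟨fun j => h1 (f j), le_trans (cnt_comp_le r f hf 1) h2,
      le_trans (cnt_comp_le r f hf (-2)) h3⟩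
  · exact Or.inr ⟨fun j => h1 (f j), le_trans (cnt_comp_le r f hf 2) h2,
      le_trans (cnt_comp_le r f hf (-2)) h3⟩

/-- entries in {0,a,b} ⇒ nonzero count and sum formulas -/
lemma nzc_eq {k : ℕ} {r : Fin k → ℤ} {a b : ℤ} (ha : a ≠ 0) (hb : b ≠ 0) (hab : a ≠ b)
    (h : ∀ j, r j = 0 ∨ r j = a ∨ r j = b) :
    nzc r = cnt r a + cnt r b := by
  unfold nzc cnt
  rw [← Finset.card_union_of_disjoint]
  · congr 1
    ext j
    simp only [Finset.mem_filter, Finset.mem_union, Finset.mem_univ, true_and]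
    rcases h j with h' | h' | h' <;> simp [h', ha, hb, Ne.symm ha, Ne.symm hb]
  · rw [Finset.disjoint_filter]
    intro j _ hja hjb
    exact hab (hja ▸ hjb ▸ rfl)

lemma sum_eq_cnt {k : ℕ} {r : Fin k → ℤ} {a b : ℤ} (ha : a ≠ 0) (hb : b ≠ 0) (hab : a ≠ b)
    (h : ∀ j, r j = 0 ∨ r j = a ∨ r j = b) :
    ∑ j, r j = (cnt r a : ℤ) * a + (cnt r b : ℤ) * b := by
  have : ∀ j, r j = (if r j = a then a else 0) + (if r j = b then b else 0) := by
    intro j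
    rcases h j with h' | h' | h' <;> simp [h', hab, Ne.symm hab, ha, hb, Ne.symm ha, Ne.symm hb]
  rw [Finset.sum_congr rfl (fun j _ => this j), Finset.sum_add_distrib]
  unfold cnt
  rw [← Finset.sum_filter, ← Finset.sum_filter]
  simp [mul_comm]

lemma filter_card_mono {k : ℕ} {p q : Fin k → Prop} [DecidablePred p] [DecidablePred q]
    (h : ∀ x, p x → q x) :
    (Finset.univ.filter p).card ≤ (Finset.univ.filter q).card :=
  Finset.card_le_card (fun x hx =>
    Finset.mem_filter.mpr ⟨Finset.mem_univ x, h x (Finset.mem_filter.mp hx).2⟩)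

lemma filter_card_le_one {k : ℕ} {p : Fin k → Prop} [DecidablePred p] {j₀ : Fin k}
    (h : ∀ x, p x → x = j₀) : (Finset.univ.filter p).card ≤ 1 := by
  refine le_trans (Finset.card_le_card (fun x hx => ?_)) (Finset.card_singleton j₀).le
  exact Finset.mem_singleton.mpr (h x (Finset.mem_filter.mp hx).2)

lemma filter_card_le_of_erase {k : ℕ} {p : Fin k → Prop} [DecidablePred p]
    {r : Fin k → ℤ} {j₀ : Fin k} (hj₀ : r j₀ = 1)
    (h : ∀ x, p x → x ≠ j₀ ∧ r x = 1) :
    (Finset.univ.filter p).card ≤ cnt r 1 - 1 := by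
  have hsub : Finset.univ.filter p ⊆ (Finset.univ.filter (fun x => r x = 1)).erase j₀ := by
    intro x hx
    obtain ⟨h1, h2⟩ := h x (Finset.mem_filter.mp hx).2
    exact Finset.mem_erase.mpr ⟨h1, Finset.mem_filter.mpr ⟨Finset.mem_univ x, h2⟩⟩
  have := Finset.card_le_card hsub
  have hjm : j₀ ∈ Finset.univ.filter (fun x => r x = 1) := by
    simp [hj₀]
  have := Finset.card_erase_of_mem hjm
  unfold cnt
  omega

lemma split_row {k : ℕ} {r : Fin k → ℤ} (h : Wt2 r) (hnz : 2 ≤ nzc r) :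
    ∃ u v : Fin k → ℤ, r = u + v ∧ Wt1 u ∧ Wt1 v := by
  rcases h with ⟨h1, h2, h3⟩ | ⟨h1, h2, h3⟩
  · -- entries in {0, 1, -2}
    have hnzc : nzc r = cnt r 1 + cnt r (-2) :=
      nzc_eq one_ne_zero (by norm_num) (by norm_num) h1
    have hc1 : 1 ≤ cnt r 1 := by omega
    obtain ⟨j₀, hj₀⟩ : ∃ j₀, r j₀ = 1 := by
      have : (Finset.univ.filter (fun j => r j = 1)).Nonempty :=
        Finset.card_pos.mp (by unfold cnt at hc1; omega)
      obtain ⟨j₀, hj₀⟩ := this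
      exact ⟨j₀, (Finset.mem_filter.mp hj₀).2⟩
    set u : Fin k → ℤ := fun x => if x = j₀ then 1 else if r x = -2 then -1 else 0 with hu
    refine ⟨u, fun x => r x - u x, by funext x; show r x = u x + (r x - u x); ring, ⟨?_, ?_, ?_⟩, ⟨?_, ?_, ?_⟩⟩
    · intro x; by_cases hx : x = j₀ <;> rcases h1 x with h' | h' | h' <;>
        simp [hu, hx, h'] <;> norm_num
    · refine le_trans (filter_card_le_one (j₀ := j₀) ?_) le_rfl
      intro x hx
      by_contra hxj
      simp only [hu, if_neg hxj] at hx
      split_ifs at hx <;> omega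
    · refine le_trans (filter_card_mono (q := fun x => r x = -2) ?_) h3
      intro x hx
      by_cases hxj : x = j₀
      · subst hxj; simp [hu] at hx
      · simp only [hu, if_neg hxj] at hx
        by_cases h' : r x = -2
        · exact h'
        · rw [if_neg h'] at hx; exact absurd hx (by norm_num)
    · intro x
      by_cases hx : x = j₀
      · subst hx; simp [hu, hj₀]
      · rcases h1 x with h' | h' | h' <;> simp [hu, hx, h'] <;> norm_num
    · have hcv : cnt (fun x => r x - u x) 1 =
          (Finset.univ.filter (fun x => r x - u x = 1)).card := rfl
      rw [hcv]
      have hfa : ∀ x, (r x - u x = 1) → x ≠ j₀ ∧ r x = 1 := by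
        intro x hx
        by_cases hxj : x = j₀
        · subst hxj; simp [hu, hj₀] at hx
        · simp only [hu, if_neg hxj] at hx
          rcases h1 x with h' | h' | h' <;> rw [h'] at hx ⊢ <;> split_ifs at hx <;>
            first
            | exact ⟨hxj, rfl⟩
            | (exfalso; omega)
            | (exfalso; tauto)
      have := filter_card_le_of_erase (p := fun x => r x - u x = 1) hj₀ hfa
      omega
    · refine le_trans (filter_card_mono (q := fun x => r x = -2) ?_) h3
      intro x hx
      by_cases hxj : x = j₀
      · subst hxj; simp [hu, hj₀] at hx
      · simp only [hu, if_neg hxj] at hx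
        rcases h1 x with h' | h' | h' <;> rw [h'] at hx ⊢ <;> split_ifs at hx <;>
          first
          | rfl
          | (exfalso; omega)
            | (exfalso; tauto)
  · -- entries in {0, 2, -2}
    set u : Fin k → ℤ := fun x => if r x = 2 then 1 else if r x = -2 then -1 else 0 with hu
    have entries : ∀ x, u x = 0 ∨ u x = 1 ∨ u x = -1 := by
      intro x; rcases h1 x with h' | h' | h' <;> simp [hu, h']
    have c1 : cnt u 1 ≤ 1 := by
      refine le_trans (filter_card_mono (q := fun x => r x = 2) ?_) h2
      intro x hx
      rcases h1 x with h' | h' | h' <;> simp [hu, h'] at hx ⊢ <;> omega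
    have cm1 : cnt u (-1) ≤ 1 := by
      refine le_trans (filter_card_mono (q := fun x => r x = -2) ?_) h3
      intro x hx
      rcases h1 x with h' | h' | h' <;> simp [hu, h'] at hx ⊢ <;> omega
    have hvu : ∀ x, r x - u x = u x := by
      intro x; rcases h1 x with h' | h' | h' <;> simp [hu, h']
    refine ⟨u, fun x => r x - u x, by funext x; show r x = u x + (r x - u x); ring, ⟨entries, c1, cm1⟩, ?_⟩
    constructor
    · intro x; dsimp only; rw [hvu x]; exact entries x
    constructor
    · refine le_trans (le_of_eq ?_) c1
      unfold cnt; congr 1; ext x; simp [hvu x]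
    · refine le_trans (le_of_eq ?_) cm1
      unfold cnt; congr 1; ext x; simp [hvu x]

lemma abs_entry_le {k : ℕ} {r : Fin k → ℤ} {w : ℕ}
    (h : (w = 1 ∧ Wt1 r) ∨ (w = 2 ∧ Wt2 r)) (j : Fin k) (hj : r j ≠ 0) :
    |r j| ≤ (w : ℤ) := by
  rcases h with ⟨hw, h1, _, _⟩ | ⟨hw, h⟩
  · subst hw; rcases h1 j with h' | h' | h' <;> simp [h'] at hj ⊢
  · subst hw
    rcases h with ⟨h1, _, _⟩ | ⟨h1, _, _⟩ <;> rcases h1 j with h' | h' | h' <;>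
      simp [h'] at hj ⊢ <;> norm_num

lemma detBound (μ : ℕ) : ∀ (k : ℕ) (M : Matrix (Fin k) (Fin k) ℤ) (w : Fin k → ℕ),
    (∀ i, (w i = 1 ∧ Wt1 (M i)) ∨ (w i = 2 ∧ Wt2 (M i))) → (∑ i, w i ≤ μ) →
    |M.det| ≤ ∏ i, (w i : ℤ) := by
  induction μ with
  | zero =>
    intro k M w hw hμ
    cases k with
    | zero => simp [Matrix.det_fin_zero]
    | succ m =>
      exfalso
      have h1 : 1 ≤ w 0 := by rcases hw 0 with ⟨h, _⟩ | ⟨h, _⟩ <;> omega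
      have := Finset.single_le_sum (f := w) (fun i _ => Nat.zero_le _) (Finset.mem_univ 0)
      omega
  | succ μ ih =>
    intro k M w hw hμ
    have hw1 : ∀ i, 1 ≤ w i := fun i => by rcases hw i with ⟨h, _⟩ | ⟨h, _⟩ <;> omega
    have hprodpos : (0:ℤ) < ∏ i, (w i : ℤ) :=
      Finset.prod_pos (fun i _ => by exact_mod_cast hw1 i)
    cases k with
    | zero => simp [Matrix.det_fin_zero]
    | succ m =>
    by_cases hA : ∃ i, nzc (M i) ≤ 1
    · obtain ⟨i, hi⟩ := hA
      rcases Nat.lt_or_ge (nzc (M i)) 1 with h0 | h0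
      · -- zero row
        have hrow : ∀ j, M i j = 0 := by
          intro j
          by_contra hj
          have hmem : j ∈ Finset.univ.filter (fun j => M i j ≠ 0) := by simp [hj]
          have := Finset.card_pos.mpr ⟨j, hmem⟩
          unfold nzc at h0; omega
        rw [Matrix.det_eq_zero_of_row_eq_zero i hrow]
        simpa using hprodpos.le
      · -- exactly one nonzero entry, at column c
        have h0' : nzc (M i) = 1 := le_antisymm hi h0
        obtain ⟨c, hc⟩ := Finset.card_eq_one.mp h0'
        have hcmem : M i c ≠ 0 := by
          have : c ∈ Finset.univ.filter (fun j => M i j ≠ 0) := by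
            rw [hc]; exact Finset.mem_singleton_self c
          simpa using this
        have hother : ∀ j, j ≠ c → M i j = 0 := by
          intro j hj
          by_contra h
          have : j ∈ ({c} : Finset (Fin (m+1))) := by
            rw [← hc]; simp [h]
          exact hj (Finset.mem_singleton.mp this)
        rw [Matrix.det_succ_row M i,
          Finset.sum_eq_single c (fun j _ hj => by rw [hother j hj]; ring) (by simp)]
        rw [abs_mul, abs_mul, abs_pow, abs_neg, abs_one, one_pow, one_mul]
        have hminor := ih m (M.submatrix i.succAbove c.succAbove) (fun i' => w (i.succAbove i'))
          (fun i' => by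
            have := hw (i.succAbove i')
            rcases this with ⟨h1, h2⟩ | ⟨h1, h2⟩
            · exact Or.inl ⟨h1, Wt1_comp h2 c.succAbove (Fin.succAbove_right_injective)⟩
            · exact Or.inr ⟨h1, Wt2_comp h2 c.succAbove (Fin.succAbove_right_injective)⟩)
          (by
            show (∑ i' : Fin m, w (i.succAbove i')) ≤ μ
            have hsplit : ∑ x, w x = w i + ∑ i', w (i.succAbove i') :=
              Fin.sum_univ_succAbove w i
            have := hw1 i
            omega)
        calc |M i c| * |(M.submatrix i.succAbove c.succAbove).det|
            ≤ (w i : ℤ) * ∏ i', (w (i.succAbove i') : ℤ) := by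
              apply mul_le_mul (abs_entry_le (hw i) c hcmem) hminor (abs_nonneg _)
              exact_mod_cast Nat.zero_le _
          _ = ∏ x, (w x : ℤ) := (Fin.prod_univ_succAbove (fun x => (w x : ℤ)) i).symm
    · push_neg at hA
      by_cases h2 : ∃ i, w i = 2
      · obtain ⟨i, hwi⟩ := h2
        have hW2 : Wt2 (M i) := by
          rcases hw i with ⟨h, _⟩ | ⟨_, h⟩
          · omega
          · exact h
        obtain ⟨u, v, huv, hu, hv⟩ := split_row hW2 (hA i)
        have hM : M = M.updateRow i (u + v) := by rw [← huv, Matrix.updateRow_eq_self]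
        have hdet : M.det = (M.updateRow i u).det + (M.updateRow i v).det := by
          conv_lhs => rw [hM]
          exact Matrix.det_updateRow_add M i u v
        set w' : Fin (m+1) → ℕ := Function.update w i 1 with hw'def
        have hsum' : ∑ x, w' x ≤ μ := by
          have e1 : ∑ x, w' x = 1 + ∑ x ∈ Finset.univ.erase i, w x := by
            rw [hw'def, Finset.sum_update_of_mem (Finset.mem_univ i)]
            rw [Finset.sdiff_singleton_eq_erase]
          have e2 : w i + ∑ x ∈ Finset.univ.erase i, w x = ∑ x, w x :=
            Finset.add_sum_erase _ w (Finset.mem_univ i)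
          omega
        have hrows' : ∀ (r : Fin (m+1) → ℤ), Wt1 r →
            ∀ i', (w' i' = 1 ∧ Wt1 ((M.updateRow i r) i')) ∨
              (w' i' = 2 ∧ Wt2 ((M.updateRow i r) i')) := by
          intro r hr i'
          by_cases hii : i' = i
          · subst hii
            left
            rw [Matrix.updateRow_self]
            exact ⟨by simp [hw'def], hr⟩
          · rw [Matrix.updateRow_ne hii]
            rw [hw'def]
            rw [Function.update_of_ne hii]
            exact hw i'
        have b1 := ih (m+1) (M.updateRow i u) w' (hrows' u hu) hsum'
        have b2 := ih (m+1) (M.updateRow i v) w' (hrows' v hv) hsum'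
        have hprod' : ∏ x, (w' x : ℤ) = ∏ x ∈ Finset.univ.erase i, (w x : ℤ) := by
          rw [hw'def]
          have : (fun x => ((Function.update w i 1 x : ℕ) : ℤ)) =
              Function.update (fun x => (w x : ℤ)) i 1 := by
            funext x
            by_cases hx : x = i
            · subst hx; simp
            · simp [Function.update_of_ne hx]
          rw [this, Finset.prod_update_of_mem (Finset.mem_univ i),
            Finset.sdiff_singleton_eq_erase, one_mul]
        have hprodw : ∏ x, (w x : ℤ) = 2 * ∏ x ∈ Finset.univ.erase i, (w x : ℤ) := by
          rw [← Finset.mul_prod_erase _ _ (Finset.mem_univ i), hwi]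
          norm_num
        calc |M.det| ≤ |(M.updateRow i u).det| + |(M.updateRow i v).det| := by
              rw [hdet]; exact abs_add_le _ _
          _ ≤ ∏ x, (w' x : ℤ) + ∏ x, (w' x : ℤ) := add_le_add b1 b2
          _ = ∏ x, (w x : ℤ) := by rw [hprod', hprodw]; ring
      · -- all weights 1: every row has exactly one 1 and one -1, so det = 0
        push_neg at h2
        have hrows1 : ∀ i, Wt1 (M i) := by
          intro i
          rcases hw i with ⟨_, h⟩ | ⟨h, _⟩
          · exact h
          · exact absurd h (h2 i)
        have hsum0 : ∀ i, ∑ j, M i j = 0 := by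
          intro i
          obtain ⟨h1, hc1, hcm1⟩ := hrows1 i
          have hnzc : nzc (M i) = cnt (M i) 1 + cnt (M i) (-1) :=
            nzc_eq one_ne_zero (by norm_num) (by norm_num) h1
          have := hA i
          have e : ∑ j, M i j = (cnt (M i) 1 : ℤ) * 1 + (cnt (M i) (-1) : ℤ) * (-1) :=
            sum_eq_cnt one_ne_zero (by norm_num) (by norm_num) h1
          have h11 : cnt (M i) 1 = 1 := by omega
          have h22 : cnt (M i) (-1) = 1 := by omega
          rw [e, h11, h22]; ring
        have hker : M *ᵥ (fun _ => (1:ℤ)) = 0 := by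
          funext i
          simp only [Matrix.mulVec, dotProduct, mul_one]
          exact hsum0 i
        have : M.det = 0 := by
          rw [← Matrix.exists_mulVec_eq_zero_iff]
          refine ⟨fun _ => 1, ?_, hker⟩
          intro h
          have := congrFun h 0
          simp at this
        rw [this]
        simpa using hprodpos.le



lemma nonzeroEntries_sum {μ : ℕ} (r : Fin μ → ℤ) : (nonzeroEntries r).sum = ∑ j, r j := by
  have h := Multiset.filter_add_not (fun x => x ≠ 0) (Finset.univ.val.map r)
  have h2 : (Multiset.filter (fun x => ¬ x ≠ 0) (Finset.univ.val.map r)).sum = 0 :=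
    Multiset.sum_eq_zero (fun x hx => not_not.mp (Multiset.mem_filter.mp hx).2)
  have h3 : (∑ j, r j) = ((Finset.univ.val.map r).sum) := rfl
  rw [h3, ← h, Multiset.sum_add, h2, add_zero]
  rfl

lemma count_nonzeroEntries {μ : ℕ} (r : Fin μ → ℤ) {v : ℤ} (hv : v ≠ 0) :
    Multiset.count v (nonzeroEntries r) = cnt r v := by
  unfold nonzeroEntries cnt
  rw [Multiset.count_filter, if_pos hv, Multiset.count_map]
  rw [Finset.card, Finset.filter_val]
  congr 1
  exact Multiset.filter_congr (fun x _ => eq_comm)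

lemma mem_nonzeroEntries {μ : ℕ} {r : Fin μ → ℤ} {j : Fin μ} (h : r j ≠ 0) :
    r j ∈ nonzeroEntries r := by
  unfold nonzeroEntries
  rw [Multiset.mem_filter]
  exact ⟨Multiset.mem_map.mpr ⟨j, Finset.mem_val.mpr (Finset.mem_univ j), rfl⟩, h⟩

lemma wt_type1 {μ : ℕ} {r : Fin μ → ℤ}
    (h : nonzeroEntries r = ({1,1,-2} : Multiset ℤ)) : Wt2 r := by
  have hc1 : cnt r 1 = 2 := by
    have := count_nonzeroEntries r (one_ne_zero (α := ℤ))
    rw [h] at this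
    rw [← this]; decide
  have hc2 : cnt r (-2) = 1 := by
    have := count_nonzeroEntries r (v := (-2 : ℤ)) (by norm_num)
    rw [h] at this
    rw [← this]; decide
  refine Or.inl ⟨?_, by omega, by omega⟩
  intro j
  by_cases hj : r j = 0
  · exact Or.inl hj
  · right
    have hm := mem_nonzeroEntries hj
    rw [h] at hm
    rcases Multiset.mem_cons.mp hm with h' | hm'
    · exact Or.inl h'
    rcases Multiset.mem_cons.mp hm' with h' | hm''
    · exact Or.inl h'
    · exact Or.inr (by simpa using hm'')

lemma wt_type2 {μ : ℕ} {r : Fin μ → ℤ}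
    (h : nonzeroEntries r = ({2,-2} : Multiset ℤ)) : Wt2 r := by
  have hc1 : cnt r 2 = 1 := by
    have := count_nonzeroEntries r (v := (2 : ℤ)) (by norm_num)
    rw [h] at this
    rw [← this]; decide
  have hc2 : cnt r (-2) = 1 := by
    have := count_nonzeroEntries r (v := (-2 : ℤ)) (by norm_num)
    rw [h] at this
    rw [← this]; decide
  refine Or.inr ⟨?_, by omega, by omega⟩
  intro j
  by_cases hj : r j = 0
  · exact Or.inl hj
  · right
    have hm := mem_nonzeroEntries hj
    rw [h] at hm
    rcases Multiset.mem_cons.mp hm with h' | hm'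
    · exact Or.inl h'
    · exact Or.inr (by simpa using hm')

lemma wt_type3 {μ : ℕ} {r : Fin μ → ℤ}
    (h : nonzeroEntries r = ({1,-1} : Multiset ℤ)) : Wt1 r := by
  have hc1 : cnt r 1 = 1 := by
    have := count_nonzeroEntries r (one_ne_zero (α := ℤ))
    rw [h] at this
    rw [← this]; decide
  have hc2 : cnt r (-1) = 1 := by
    have := count_nonzeroEntries r (v := (-1 : ℤ)) (by norm_num)
    rw [h] at this
    rw [← this]; decide
  refine ⟨?_, by omega, by omega⟩
  intro j
  by_cases hj : r j = 0
  · exact Or.inl hj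
  · right
    have hm := mem_nonzeroEntries hj
    rw [h] at hm
    rcases Multiset.mem_cons.mp hm with h' | hm'
    · exact Or.inl h'
    · exact Or.inr (by simpa using hm')

/- Here `l = m + 1`, so `A` is an `(l-1) × l` matrix with `l - 1 = m`. -/
theorem stmt_13 (n : ℕ) (hn : 2 ≤ n) (m : ℕ)
    (A : Matrix (Fin m) (Fin (m + 1)) ℤ)
    (hrank : (A.map ((↑) : ℤ → ℚ)).rank = m)
    (hsum : ∀ i, ∑ j, A i j = 0)
    (hrows : ∀ i, admissibleRow (A i))
    (hsol : ∃ y : Fin (m + 1) → ℤ, nEffective n y ∧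
      ∀ i, (∑ j, A i j * y j) ≡ 0 [ZMOD (n : ℤ)]) :
    n ≤ 2 ^ m := by
  classical
  obtain ⟨y, hyEff, hysol⟩ := hsol
  -- Only the three zero-sum row types can occur
  have htype : ∀ i, nonzeroEntries (A i) = ({1,1,-2} : Multiset ℤ) ∨
      nonzeroEntries (A i) = ({2,-2} : Multiset ℤ) ∨
      nonzeroEntries (A i) = ({1,-1} : Multiset ℤ) := by
    intro i
    have hs : (nonzeroEntries (A i)).sum = 0 := by
      rw [nonzeroEntries_sum]; exact hsum i
    have hr := hrows i
    simp only [admissibleRow, Set.mem_insert_iff, Set.mem_singleton_iff] at hr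
    rcases hr with h|h|h|h|h|h|h|h|h
    · exact Or.inl h
    · exact Or.inr (Or.inl h)
    · exact Or.inr (Or.inr h)
    all_goals (rw [h] at hs; exact absurd hs (by decide))
  set B : Matrix (Fin m) (Fin m) ℤ := fun i j => A i j.castSucc with hBdef
  -- weights
  set w : Fin m → ℕ :=
    fun i => if nonzeroEntries (A i) = ({1,-1} : Multiset ℤ) then 1 else 2 with hwdef
  have hw : ∀ i, (w i = 1 ∧ Wt1 (B i)) ∨ (w i = 2 ∧ Wt2 (B i)) := by
    intro i
    rcases htype i with h | h | h
    · refine Or.inr ⟨by simp only [hwdef]; rw [if_neg (by rw [h]; decide)], ?_⟩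
      exact Wt2_comp (wt_type1 h) Fin.castSucc (Fin.castSucc_injective m)
    · refine Or.inr ⟨by simp only [hwdef]; rw [if_neg (by rw [h]; decide)], ?_⟩
      exact Wt2_comp (wt_type2 h) Fin.castSucc (Fin.castSucc_injective m)
    · refine Or.inl ⟨by simp only [hwdef]; rw [if_pos h], ?_⟩
      exact Wt1_comp (wt_type3 h) Fin.castSucc (Fin.castSucc_injective m)
  have hbound : |B.det| ≤ ∏ i, (w i : ℤ) := detBound (∑ i, w i) m B w hw le_rfl
  have hb2 : ∏ i, (w i : ℤ) ≤ 2 ^ m := by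
    calc ∏ i, (w i : ℤ) ≤ ∏ _i : Fin m, (2:ℤ) := by
          apply Finset.prod_le_prod
          · intro i _; exact_mod_cast Nat.zero_le _
          · intro i _
            simp only [hwdef]
            split_ifs <;> norm_num
      _ = 2 ^ m := by simp
  -- det B ≠ 0
  have hdetB0 : B.det ≠ 0 := by
    intro h0
    set Aq : Matrix (Fin m) (Fin (m+1)) ℚ := A.map ((↑) : ℤ → ℚ) with hAqdef
    have h0q : (B.map ((↑) : ℤ → ℚ)).det = 0 := by
      have hmd := RingHom.map_det (Int.castRingHom ℚ) B
      rw [h0] at hmd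
      rw [RingHom.mapMatrix_apply] at hmd
      have : B.map ((↑) : ℤ → ℚ) = B.map (Int.castRingHom ℚ) := rfl
      rw [this, ← hmd]
      simp
    obtain ⟨v, hv0, hvker⟩ := Matrix.exists_mulVec_eq_zero_iff.mpr h0q
    set v' : Fin (m+1) → ℚ := Fin.snoc v 0 with hv'def
    have hv'ker : Aq.mulVecLin v' = 0 := by
      rw [Matrix.mulVecLin_apply]
      funext i
      have hv := congrFun hvker i
      simp only [Matrix.mulVec, dotProduct, Pi.zero_apply] at hv ⊢
      rw [Fin.sum_univ_castSucc]
      have e2 : v' (Fin.last m) = 0 := by rw [hv'def]; simp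
      rw [e2, mul_zero, add_zero, ← hv]
      apply Finset.sum_congr rfl
      intro j _
      have e1 : v' (Fin.castSucc j) = v j := by rw [hv'def]; simp
      rw [e1]
      rfl
    have honesker : Aq.mulVecLin (fun _ => (1:ℚ)) = 0 := by
      rw [Matrix.mulVecLin_apply]
      funext i
      simp only [Matrix.mulVec, dotProduct, mul_one, Pi.zero_apply]
      have : ∑ j, Aq i j = ((∑ j, A i j : ℤ) : ℚ) := by
        rw [Int.cast_sum]
        apply Finset.sum_congr rfl
        intro j _
        rfl
      rw [this, hsum i]
      norm_num
    have hrn := LinearMap.finrank_range_add_finrank_ker (Aq.mulVecLin)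
    have hrk : Module.finrank ℚ (LinearMap.range Aq.mulVecLin) = m := hrank
    rw [hrk, Module.finrank_fin_fun] at hrn
    have hker1 : Module.finrank ℚ (LinearMap.ker Aq.mulVecLin) = 1 := by omega
    set K := LinearMap.ker Aq.mulVecLin with hKdef
    have hxK : v' ∈ K := LinearMap.mem_ker.mpr hv'ker
    have hyK : (fun _ => (1:ℚ)) ∈ K := LinearMap.mem_ker.mpr honesker
    have hone0 : ∃ j0, v j0 ≠ 0 := by
      by_contra hall
      push_neg at hall
      exact hv0 (funext hall)
    have hli : LinearIndependent ℚ
        ![(⟨v', hxK⟩ : K), (⟨fun _ => (1:ℚ), hyK⟩ : K)] := by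
      apply LinearIndependent.of_comp K.subtype
      have hfam : (K.subtype ∘ ![(⟨v', hxK⟩ : K), (⟨fun _ => (1:ℚ), hyK⟩ : K)])
          = ![v', fun _ => (1:ℚ)] := by
        funext z
        fin_cases z <;> rfl
      rw [hfam, linearIndependent_fin2]
      constructor
      · intro h
        have := congrFun h (Fin.last m)
        simp at this
      · intro a ha
        have hlast := congrFun ha (Fin.last m)
        simp only [Matrix.cons_val_one, Matrix.head_cons, Matrix.cons_val_zero,
          Pi.smul_apply, smul_eq_mul, mul_one] at hlast
        rw [hv'def, Fin.snoc_last] at hlast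
        obtain ⟨j0, hj0⟩ := hone0
        have hj := congrFun ha (Fin.castSucc j0)
        simp only [Matrix.cons_val_one, Matrix.head_cons, Matrix.cons_val_zero,
          Pi.smul_apply, smul_eq_mul, mul_one] at hj
        rw [hv'def, Fin.snoc_castSucc, hlast] at hj
        exact hj0 hj.symm
    have hcard := hli.fintype_card_le_finrank
    rw [hker1] at hcard
    simp at hcard
  -- effective solution gives n ∣ det B
  set z : Fin m → ℤ := fun j => y j.castSucc - y (Fin.last m) with hzdef
  have hBz : ∀ i, (n:ℤ) ∣ (B *ᵥ z) i := by
    intro i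
    have e : (B *ᵥ z) i = ∑ j, A i j * y j := by
      simp only [Matrix.mulVec, dotProduct]
      have e1 : ∑ j : Fin m, B i j * z j
          = ∑ j : Fin (m+1), A i j * (y j - y (Fin.last m)) := by
        rw [Fin.sum_univ_castSucc]
        simp
        rfl
      rw [e1]
      have e2 : ∑ j : Fin (m+1), A i j * (y j - y (Fin.last m))
          = ∑ j, A i j * y j - (∑ j, A i j) * y (Fin.last m) := by
        rw [Finset.sum_mul]
        rw [← Finset.sum_sub_distrib]
        apply Finset.sum_congr rfl
        intro j _
        ring
      rw [e2, hsum i]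
      ring
    rw [e]
    exact Int.modEq_zero_iff_dvd.mp (hysol i)
  have hdz : ∀ j, (n:ℤ) ∣ B.det * z j := by
    intro j
    have hAdj : B.det • z = B.adjugate *ᵥ (B *ᵥ z) := by
      rw [Matrix.mulVec_mulVec, Matrix.adjugate_mul, Matrix.smul_mulVec,
        Matrix.one_mulVec]
    have hc := congrFun hAdj j
    rw [Pi.smul_apply, smul_eq_mul] at hc
    rw [hc]
    simp only [Matrix.mulVec, dotProduct]
    exact Finset.dvd_sum (fun t _ => Dvd.dvd.mul_left (hBz t) _)
  have heff : ∀ p : ℕ, p.Prime → p ∣ n → ∃ j, ¬ (p:ℤ) ∣ z j := by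
    intro p hp hpn
    by_contra hall
    push_neg at hall
    apply hyEff p hp hpn
    have key : ∀ c : Fin (m+1), y c ≡ y (Fin.last m) [ZMOD (p:ℤ)] := by
      intro c
      induction c using Fin.lastCases with
      | last => rfl
      | cast j =>
        rw [Int.modEq_iff_dvd]
        have hd := (hall j).neg_right
        rw [hzdef] at hd
        simpa [neg_sub] using hd
    intro a b
    exact (key a).trans (key b).symm
  have hdvdn : n ∣ B.det.natAbs := by
    rw [Nat.dvd_iff_prime_pow_dvd_dvd]
    intro p k hp hpk
    rcases Nat.eq_zero_or_pos k with rfl | hk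
    · simp
    have hpn : p ∣ n := dvd_trans (dvd_pow_self p hk.ne') hpk
    obtain ⟨j, hj⟩ := heff p hp hpn
    have h1 : ((p:ℤ))^k ∣ B.det * z j := by
      have hnk : ((p^k : ℕ) : ℤ) ∣ (n:ℤ) := Int.natCast_dvd_natCast.mpr hpk
      push_cast at hnk
      exact hnk.trans (hdz j)
    have hpZ : Prime (p:ℤ) := Nat.prime_iff_prime_int.mp hp
    have h2 := hpZ.pow_dvd_of_dvd_mul_right k hj h1
    have h3 : ((p:ℤ)^k).natAbs ∣ B.det.natAbs := Int.natAbs_dvd_natAbs.mpr h2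
    have h4 : ((p:ℤ)^k).natAbs = p ^ k := by
      rw [Int.natAbs_pow, Int.natAbs_natCast]
    rwa [h4] at h3
  have hpos : 0 < B.det.natAbs := Int.natAbs_pos.mpr hdetB0
  have hle := Nat.le_of_dvd hpos hdvdn
  have hfin : (B.det.natAbs : ℤ) ≤ 2 ^ m := by
    rw [← Int.abs_eq_natAbs]
    exact le_trans hbound hb2
  have hfin' : B.det.natAbs ≤ 2 ^ m := by exact_mod_cast hfin
  omega
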